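/- For β > β_c, the sequence of Gibbs measures μ_{β,n} converges weakly (i.e., ∫f dμ_{β,n} converges for every continuous f on [0,1]) to a limit probability measure μ_* which is supported on the middle-third Cantor set: μ_*(C) = 1, where C = ⋂ C_m. -/

import Mathlib

open MeasureTheory Set Real Filter

noncomputable def cantorStage : ℕ → Set ℝ
  | 0 => Set.Icc 0 1
  | (m+1) => (fun x => x / 3) '' cantorStage m ∪ (fun x => (x + 2) / 3) '' cantorStage m

noncomputable def Bset (m : ℕ) : Set ℝ := cantorStage (m - 1) \ cantorStage m

noncomputable def psi (A : ℕ → ℝ) (n : ℕ) (x : ℝ) : ℝ :=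
  -∑ k ∈ Finset.Icc 1 n, A k * (Bset k).indicator (fun _ => (1:ℝ)) x

noncomputable def hc : ℝ := Real.log (3/2)

noncomputable def psiα (α : ℝ) : ℕ → ℝ → ℝ := psi (fun k => α * k)

noncomputable def Zf (α β : ℝ) (n : ℕ) : ℝ :=
  ∫ x in Set.Icc (0:ℝ) 1, Real.exp (-β * psiα α n x)

noncomputable def gibbs (α β : ℝ) (n : ℕ) (A : Set ℝ) : ℝ :=
  (∫ x in A ∩ Set.Icc (0:ℝ) 1, Real.exp (-β * psiα α n x)) / Zf α β n

/-! ### Auxiliary development -/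

lemma cantor_subset (m : ℕ) : cantorStage m ⊆ Set.Icc (0:ℝ) 1 := by
  induction m with
  | zero => simp [cantorStage]
  | succ m ih =>
    rintro x (⟨y, hy, rfl⟩ | ⟨y, hy, rfl⟩) <;>
      obtain ⟨h0, h1⟩ := ih hy <;> constructor <;> simp only <;> linarith

lemma cantor_compact (m : ℕ) : IsCompact (cantorStage m) := by
  induction m with
  | zero => exact isCompact_Icc
  | succ m ih =>
    exact (ih.image (by continuity)).union (ih.image (by continuity))

lemma cantor_meas (m : ℕ) : MeasurableSet (cantorStage m) :=
  (cantor_compact m).isClosed.measurableSet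

lemma cantor_anti : Antitone cantorStage := by
  apply antitone_nat_of_succ_le
  intro m
  induction m with
  | zero => exact cantor_subset 1
  | succ m ih =>
    exact Set.union_subset_union (Set.image_mono ih) (Set.image_mono ih)

noncomputable def SS (F : ℝ → ℝ) (y : ℝ) : ℝ := (F (y/3) + F ((y+2)/3)) / 2

lemma SS_cont {F : ℝ → ℝ} (hF : Continuous F) : Continuous (SS F) := by
  unfold SS; continuity

lemma SS_iter_cont {F : ℝ → ℝ} (hF : Continuous F) (m : ℕ) : Continuous (SS^[m] F) := by
  induction m generalizing F with
  | zero => exact hF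
  | succ m ih => rw [Function.iterate_succ_apply]; exact ih (SS_cont hF)

lemma SS_one (m : ℕ) : SS^[m] (fun _ => (1:ℝ)) = fun _ => (1:ℝ) := by
  induction m with
  | zero => rfl
  | succ m ih => rw [Function.iterate_succ_apply, show SS (fun _ => (1:ℝ)) = fun _ => (1:ℝ) by
      funext y; simp [SS], ih]

noncomputable def bseq (F : ℝ → ℝ) (m : ℕ) : ℝ := ∫ y in Set.Icc (0:ℝ) 1, (SS^[m] F) y

lemma integral_image_third {F : ℝ → ℝ} (s : Set ℝ) (hs : MeasurableSet s) :
    ∫ x in (fun x => x / 3) '' s, F x = (1/3) * ∫ y in s, F (y/3) := by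
  rw [integral_image_eq_integral_abs_deriv_smul (f := fun x => x / 3) (f' := fun _ => (1/3:ℝ)) hs
    (fun x _ => HasDerivWithinAt.div_const (hasDerivWithinAt_id x s) 3)
    (fun a _ b _ h => by dsimp at h; linarith)]
  simp only [smul_eq_mul, abs_of_nonneg (by norm_num : (0:ℝ) ≤ (1/3:ℝ))]
  rw [MeasureTheory.integral_const_mul]

lemma integral_image_third' {F : ℝ → ℝ} (s : Set ℝ) (hs : MeasurableSet s) :
    ∫ x in (fun x => (x + 2) / 3) '' s, F x = (1/3) * ∫ y in s, F ((y+2)/3) := by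
  rw [integral_image_eq_integral_abs_deriv_smul (f := fun x => (x + 2) / 3)
    (f' := fun _ => (1/3:ℝ)) hs
    (fun x _ => HasDerivWithinAt.div_const ((hasDerivWithinAt_id x s).add_const 2) 3)
    (fun a _ b _ h => by dsimp at h; linarith)]
  simp only [smul_eq_mul, abs_of_nonneg (by norm_num : (0:ℝ) ≤ (1/3:ℝ))]
  rw [MeasureTheory.integral_const_mul]

lemma contIntegrableOn {F : ℝ → ℝ} (hF : Continuous F) {s : Set ℝ}
    (hs : s ⊆ Set.Icc (0:ℝ) 1) : IntegrableOn F s := by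
  exact (hF.integrableOn_Icc).mono_set hs

lemma setIntegral_cantor_succ {F : ℝ → ℝ} (hF : Continuous F) (m : ℕ) :
    ∫ x in cantorStage (m+1), F x = (2/3) * ∫ y in cantorStage m, SS F y := by
  have h1 : (fun x : ℝ => x / 3) '' cantorStage m ⊆ Set.Icc (0:ℝ) 1 :=
    fun x hx => cantor_subset (m+1) (Or.inl hx)
  have h2 : (fun x : ℝ => (x + 2) / 3) '' cantorStage m ⊆ Set.Icc (0:ℝ) 1 :=
    fun x hx => cantor_subset (m+1) (Or.inr hx)
  have hd : Disjoint ((fun x : ℝ => x / 3) '' cantorStage m)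
      ((fun x : ℝ => (x + 2) / 3) '' cantorStage m) := by
    rw [Set.disjoint_left]
    rintro x ⟨y, hy, rfl⟩ ⟨z, hz, hz'⟩
    have h1 := (cantor_subset m hy).2
    have h2 := (cantor_subset m hz).1
    simp only at hz'
    linarith [hz'.symm.le]
  have hm1 : MeasurableSet ((fun x : ℝ => x / 3) '' cantorStage m) :=
    ((cantor_compact m).image (by continuity)).isClosed.measurableSet
  have hm2 : MeasurableSet ((fun x : ℝ => (x + 2) / 3) '' cantorStage m) :=
    ((cantor_compact m).image (by continuity)).isClosed.measurableSet
  have hcs : cantorStage (m+1) = (fun x : ℝ => x / 3) '' cantorStage m ∪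
      (fun x : ℝ => (x + 2) / 3) '' cantorStage m := rfl
  rw [hcs, MeasureTheory.setIntegral_union hd hm2 (contIntegrableOn hF h1)
    (contIntegrableOn hF h2), integral_image_third _ (cantor_meas m),
    integral_image_third' _ (cantor_meas m)]
  have : ∫ y in cantorStage m, SS F y
      = ((∫ y in cantorStage m, F (y/3)) + (∫ y in cantorStage m, F ((y+2)/3))) / 2 := by
    simp only [SS]
    rw [MeasureTheory.integral_div, MeasureTheory.integral_add
      (contIntegrableOn (F := fun y : ℝ => F (y/3)) (by continuity) (cantor_subset m))
      (contIntegrableOn (F := fun y : ℝ => F ((y+2)/3)) (by continuity) (cantor_subset m))]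
  rw [this]; ring

lemma mem13 {u : ℝ} (hu : u ∈ Set.Icc (0:ℝ) 1) : u/3 ∈ Set.Icc (0:ℝ) 1 :=
  ⟨by linarith [hu.1], by linarith [hu.2]⟩
lemma mem23 {u : ℝ} (hu : u ∈ Set.Icc (0:ℝ) 1) : (u+2)/3 ∈ Set.Icc (0:ℝ) 1 :=
  ⟨by linarith [hu.1], by linarith [hu.2]⟩

lemma osc_SS {F : ℝ → ℝ} {ε : ℝ} (m : ℕ)
    (hF : ∀ u ∈ Set.Icc (0:ℝ) 1, ∀ v ∈ Set.Icc (0:ℝ) 1, |u - v| ≤ (1/3)^m → |F u - F v| ≤ ε) :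
    ∀ y ∈ Set.Icc (0:ℝ) 1, ∀ z ∈ Set.Icc (0:ℝ) 1, |SS^[m] F y - SS^[m] F z| ≤ ε := by
  induction m generalizing F with
  | zero =>
    intro y hy z hz
    exact hF y hy z hz (by rw [abs_le]; constructor <;> [linarith [hy.1, hz.2]; linarith [hy.2, hz.1]])
  | succ m ih =>
    intro y hy z hz
    rw [Function.iterate_succ_apply]
    refine ih (F := SS F) ?_ y hy z hz
    intro u hu v hv huv
    have key : ∀ w w' : ℝ, w ∈ Set.Icc (0:ℝ) 1 → w' ∈ Set.Icc (0:ℝ) 1 → |w - w'| ≤ (1/3)^m →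
        |SS F w - SS F w'| ≤ ε := by
      intro w w' hw hw' hww
      have h1 : |F (w/3) - F (w'/3)| ≤ ε := by
        refine hF _ (mem13 hw) _ (mem13 hw') ?_
        rw [show w/3 - w'/3 = (w - w')/3 by ring, abs_div]
        rw [show |(3:ℝ)| = 3 by norm_num]
        rw [pow_succ]; nlinarith [abs_nonneg (w - w')]
      have h2 : |F ((w+2)/3) - F ((w'+2)/3)| ≤ ε := by
        refine hF _ (mem23 hw) _ (mem23 hw') ?_
        rw [show (w+2)/3 - (w'+2)/3 = (w - w')/3 by ring, abs_div]
        rw [show |(3:ℝ)| = 3 by norm_num]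
        rw [pow_succ]; nlinarith [abs_nonneg (w - w')]
      have : SS F w - SS F w' = ((F (w/3) - F (w'/3)) + (F ((w+2)/3) - F ((w'+2)/3)))/2 := by
        simp [SS]; ring
      rw [this]
      calc |((F (w/3) - F (w'/3)) + (F ((w+2)/3) - F ((w'+2)/3)))/2|
          ≤ (|F (w/3) - F (w'/3)| + |F ((w+2)/3) - F ((w'+2)/3)|)/2 := by
            rw [abs_div, show |(2:ℝ)| = 2 by norm_num]
            gcongr
            exact abs_add_le _ _
        _ ≤ ε := by linarith [abs_nonneg (F (w/3) - F (w'/3))]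
    exact key u v hu hv huv

lemma approx_SS {G : ℝ → ℝ} {ε : ℝ} (j : ℕ) (H : ℝ → ℝ)
    (h : ∀ u ∈ Set.Icc (0:ℝ) 1, ∀ v ∈ Set.Icc (0:ℝ) 1, |H u - G v| ≤ ε) :
    ∀ y ∈ Set.Icc (0:ℝ) 1, ∀ z ∈ Set.Icc (0:ℝ) 1, |SS^[j] H y - G z| ≤ ε := by
  induction j generalizing H with
  | zero => exact h
  | succ j ih =>
    intro y hy z hz
    rw [Function.iterate_succ_apply]
    refine ih (SS H) ?_ y hy z hz
    intro u hu v hv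
    have h1 := h _ (mem13 hu) v hv
    have h2 := h _ (mem23 hu) v hv
    have : SS H u - G v = ((H (u/3) - G v) + (H ((u+2)/3) - G v))/2 := by simp [SS]; ring
    rw [this]
    calc |((H (u/3) - G v) + (H ((u+2)/3) - G v))/2|
        ≤ (|H (u/3) - G v| + |H ((u+2)/3) - G v|)/2 := by
          rw [abs_div, show |(2:ℝ)| = 2 by norm_num]; gcongr; exact abs_add_le _ _
      _ ≤ ε := by linarith [abs_nonneg (H (u/3) - G v)]

noncomputable def cbit (i : ℕ) (t : ℝ) : ℝ := if Int.fract (2^i * t) < 1/2 then 0 else 1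

lemma cbit_nonneg (i : ℕ) (t : ℝ) : 0 ≤ cbit i t := by unfold cbit; split <;> norm_num
lemma cbit_le_one (i : ℕ) (t : ℝ) : cbit i t ≤ 1 := by unfold cbit; split <;> norm_num

lemma term_nonneg (i : ℕ) (t : ℝ) : 0 ≤ 2 * cbit i t / 3^(i+1) :=
  div_nonneg (mul_nonneg (by norm_num) (cbit_nonneg i t)) (by positivity)

lemma gterm_eq (i : ℕ) : (2:ℝ) * 1 / 3^(i+1) = (2/3) * (1/3)^i := by
  rw [div_pow, one_pow, pow_succ]
  field_simp

lemma gterm_summable : Summable (fun i : ℕ => (2:ℝ) * 1 / 3^(i+1)) := by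
  simp only [gterm_eq]
  exact (summable_geometric_of_lt_one (by norm_num) (by norm_num)).mul_left _

lemma gterm_sum : ∑' i : ℕ, (2:ℝ) * 1 / 3^(i+1) = 1 := by
  simp only [gterm_eq]
  rw [tsum_mul_left, tsum_geometric_of_lt_one (by norm_num) (by norm_num)]
  norm_num

lemma term_le (i : ℕ) (t : ℝ) : 2 * cbit i t / 3^(i+1) ≤ (2:ℝ) * 1 / 3^(i+1) := by
  exact (div_le_div_iff_of_pos_right (by positivity)).2 (by linarith [cbit_le_one i t])

lemma cbit_summable (t : ℝ) : Summable (fun i => 2 * cbit i t / 3^(i+1)) :=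
  Summable.of_nonneg_of_le (fun i => term_nonneg i t) (fun i => term_le i t) gterm_summable

noncomputable def phi (t : ℝ) : ℝ := ∑' i, 2 * cbit i t / 3^(i+1)

lemma phi_nonneg (t : ℝ) : 0 ≤ phi t := tsum_nonneg (fun i => term_nonneg i t)

lemma phi_le_one (t : ℝ) : phi t ≤ 1 := by
  rw [← gterm_sum]
  exact Summable.tsum_le_tsum (fun i => term_le i t) (cbit_summable t) gterm_summable

lemma phi_mem (t : ℝ) : phi t ∈ Set.Icc (0:ℝ) 1 := ⟨phi_nonneg t, phi_le_one t⟩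

lemma cbit_succ_left (i : ℕ) (t : ℝ) : cbit (i+1) t = cbit i (2*t) := by
  unfold cbit
  rw [show (2:ℝ)^(i+1) * t = 2^i * (2*t) by ring]

lemma cbit_succ_right (i : ℕ) (t : ℝ) : cbit (i+1) t = cbit i (2*t - 1) := by
  unfold cbit
  have : (2:ℝ)^i * (2*t - 1) = 2^(i+1) * t - (2^i : ℤ) := by push_cast; ring
  rw [this, Int.fract_sub_intCast]

lemma cbit_zero_left {t : ℝ} (h0 : 0 ≤ t) (h1 : t < 1/2) : cbit 0 t = 0 := by
  unfold cbit
  rw [pow_zero, one_mul, Int.fract_eq_self.2 ⟨h0, by linarith⟩]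
  exact if_pos h1

lemma cbit_zero_right {t : ℝ} (h0 : 1/2 ≤ t) (h1 : t < 1) : cbit 0 t = 1 := by
  unfold cbit
  rw [pow_zero, one_mul, Int.fract_eq_self.2 ⟨by linarith, h1⟩]
  exact if_neg (not_lt.2 h0)

lemma phi_shift (t : ℝ) (s : ℝ) (h : ∀ i, cbit (i+1) t = cbit i s) :
    phi t = 2 * cbit 0 t / 3 + phi s / 3 := by
  unfold phi
  rw [Summable.tsum_eq_zero_add (cbit_summable t)]
  congr 1
  · norm_num
  · rw [← tsum_div_const]
    apply tsum_congr
    intro i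
    rw [h i, show (3:ℝ)^(i+1+1) = 3^(i+1) * 3 by ring]
    ring

lemma phi_left {t : ℝ} (h0 : 0 ≤ t) (h1 : t < 1/2) : phi t = phi (2*t) / 3 := by
  rw [phi_shift t (2*t) (fun i => cbit_succ_left i t), cbit_zero_left h0 h1]
  ring

lemma phi_right {t : ℝ} (h0 : 1/2 ≤ t) (h1 : t < 1) : phi t = (phi (2*t - 1) + 2) / 3 := by
  rw [phi_shift t (2*t - 1) (fun i => cbit_succ_right i t), cbit_zero_right h0 h1]
  ring

lemma cbit_measurable (i : ℕ) : Measurable (cbit i) := by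
  unfold cbit
  exact Measurable.ite
    (measurableSet_lt (measurable_fract.comp (measurable_id.const_mul _)) measurable_const)
    measurable_const measurable_const

lemma phi_measurable : Measurable phi := by
  apply measurable_of_tendsto_metrizable'
    (f := fun n t => ∑ i ∈ Finset.range n, 2 * cbit i t / 3^(i+1)) atTop
  · intro n
    exact Finset.measurable_sum _ (fun i _ =>
      ((cbit_measurable i).const_mul 2).div_const _)
  · rw [tendsto_pi_nhds]
    intro t
    exact (cbit_summable t).hasSum.tendsto_sum_nat

lemma phi_mem_cantor (m : ℕ) : ∀ t ∈ Set.Ico (0:ℝ) 1, phi t ∈ cantorStage m := by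
  induction m with
  | zero => exact fun t _ => phi_mem t
  | succ m ih =>
    intro t ⟨h0, h1⟩
    by_cases h : t < 1/2
    · left
      exact ⟨phi (2*t), ih _ ⟨by linarith, by linarith⟩, (phi_left h0 h).symm⟩
    · right
      exact ⟨phi (2*t - 1), ih _ ⟨by linarith [not_lt.1 h], by linarith⟩,
        (phi_right (not_lt.1 h) h1).symm⟩

lemma comp_phi_integrable {H : ℝ → ℝ} (hH : Continuous H) (a b : ℝ) :
    IntervalIntegrable (fun t => H (phi t)) volume a b := by
  obtain ⟨M, hM⟩ := (isCompact_Icc (a := (0:ℝ)) (b := 1)).exists_bound_of_continuousOn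
    hH.continuousOn
  apply IntervalIntegrable.mono_fun' (g := fun _ => M)
  · exact intervalIntegrable_const
  · exact (hH.measurable.comp phi_measurable).aestronglyMeasurable
  · exact Filter.Eventually.of_forall fun t => hM _ (phi_mem t)

lemma subst_half (G : ℝ → ℝ) :
    ∫ t in (0:ℝ)..(1/2:ℝ), G (2*t) = (1/2) * ∫ s in (0:ℝ)..(1:ℝ), G s := by
  rw [intervalIntegral.integral_comp_mul_left G (by norm_num : (2:ℝ) ≠ 0)]
  norm_num

lemma subst_half' (G : ℝ → ℝ) :
    ∫ t in (1/2:ℝ)..(1:ℝ), G (2*t - 1) = (1/2) * ∫ s in (0:ℝ)..(1:ℝ), G s := by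
  have := intervalIntegral.integral_comp_mul_add G (by norm_num : (2:ℝ) ≠ 0) (-1)
    (a := (1/2:ℝ)) (b := (1:ℝ))
  simp only [show ∀ t : ℝ, 2*t + (-1) = 2*t - 1 by intro t; ring] at this
  rw [this]
  norm_num

lemma phi_subst {H : ℝ → ℝ} (hH : Continuous H) :
    ∫ t in (0:ℝ)..(1:ℝ), H (phi t) = ∫ t in (0:ℝ)..(1:ℝ), (SS H) (phi t) := by
  have hsplit : ∫ t in (0:ℝ)..(1:ℝ), H (phi t)
      = (∫ t in (0:ℝ)..(1/2:ℝ), H (phi t)) + ∫ t in (1/2:ℝ)..(1:ℝ), H (phi t) :=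
    (intervalIntegral.integral_add_adjacent_intervals
      (comp_phi_integrable hH 0 (1/2)) (comp_phi_integrable hH (1/2) 1)).symm
  have h1 : ∫ t in (0:ℝ)..(1/2:ℝ), H (phi t) = ∫ t in (0:ℝ)..(1/2:ℝ), H (phi (2*t) / 3) := by
    apply intervalIntegral.integral_congr_ae
    rw [ae_iff]
    refine measure_mono_null ?_ (Real.volume_singleton (a := (1/2:ℝ)))
    intro t ht
    simp only [Set.mem_setOf_eq, _root_.not_imp] at ht
    obtain ⟨ht, hne⟩ := ht
    rw [Set.uIoc_of_le (by norm_num : (0:ℝ) ≤ 1/2)] at ht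
    by_contra hne'
    have htlt : t < 1/2 := lt_of_le_of_ne ht.2 (by simpa using hne')
    exact hne (by rw [phi_left ht.1.le htlt])
  have h2 : ∫ t in (1/2:ℝ)..(1:ℝ), H (phi t)
      = ∫ t in (1/2:ℝ)..(1:ℝ), H ((phi (2*t - 1) + 2) / 3) := by
    apply intervalIntegral.integral_congr_ae
    rw [ae_iff]
    refine measure_mono_null ?_ (Real.volume_singleton (a := (1:ℝ)))
    intro t ht
    simp only [Set.mem_setOf_eq, _root_.not_imp] at ht
    obtain ⟨ht, hne⟩ := ht
    rw [Set.uIoc_of_le (by norm_num : (1/2:ℝ) ≤ 1)] at ht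
    by_contra hne'
    have htlt : t < 1 := lt_of_le_of_ne ht.2 (by simpa using hne')
    exact hne (by rw [phi_right (by linarith [ht.1]) htlt])
  have e1 : ∫ t in (0:ℝ)..(1/2:ℝ), H (phi (2*t) / 3)
      = (1/2) * ∫ s in (0:ℝ)..(1:ℝ), H (phi s / 3) :=
    subst_half (fun s => H (phi s / 3))
  have e2 : ∫ t in (1/2:ℝ)..(1:ℝ), H ((phi (2*t - 1) + 2) / 3)
      = (1/2) * ∫ s in (0:ℝ)..(1:ℝ), H ((phi s + 2) / 3) :=
    subst_half' (fun s => H ((phi s + 2) / 3))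
  have i1 : IntervalIntegrable (fun s => H (phi s / 3)) volume 0 1 :=
    comp_phi_integrable (H := fun x => H (x/3)) (by continuity) 0 1
  have i2 : IntervalIntegrable (fun s => H ((phi s + 2) / 3)) volume 0 1 :=
    comp_phi_integrable (H := fun x => H ((x+2)/3)) (by continuity) 0 1
  have eadd : ∫ s in (0:ℝ)..(1:ℝ), (SS H) (phi s)
      = (∫ s in (0:ℝ)..(1:ℝ), H (phi s / 3)) / 2 + (∫ s in (0:ℝ)..(1:ℝ), H ((phi s + 2) / 3)) / 2 := by
    have : (fun s => (SS H) (phi s))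
        = fun s => ((fun s => H (phi s / 3)) s + (fun s => H ((phi s + 2) / 3)) s) / 2 := by
      funext s; simp [SS]
    rw [this]
    rw [intervalIntegral.integral_div, intervalIntegral.integral_add i1 i2]
    ring
  rw [hsplit, h1, h2, e1, e2, eadd]
  ring

lemma sq_ge (q : ℝ) (hq : 1 < q) (n : ℕ) (hn : 1 ≤ n) :
    q^n ≤ ∑ k ∈ Finset.Icc 1 n, q^k :=
  Finset.single_le_sum (f := fun k => q^k) (fun k _ => by positivity)
    (Finset.mem_Icc.2 ⟨hn, le_refl n⟩)

lemma sq_pos (q : ℝ) (hq : 1 < q) (n : ℕ) (hn : 1 ≤ n) :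
    0 < ∑ k ∈ Finset.Icc 1 n, q^k :=
  lt_of_lt_of_le (by positivity) (sq_ge q hq n hn)

lemma weighted_avg (q : ℝ) (hq : 1 < q) (w : ℕ → ℝ) (hw0 : ∀ k, 0 ≤ w k)
    (hw : Tendsto w atTop (nhds 0)) :
    Tendsto (fun n => (∑ k ∈ Finset.Icc 1 n, q^k * w k) / (∑ k ∈ Finset.Icc 1 n, q^k))
      atTop (nhds 0) := by
  rw [Metric.tendsto_atTop]
  intro ε hε
  -- choose K with w k ≤ ε/2 for k ≥ K
  obtain ⟨K, hK⟩ := (Metric.tendsto_atTop.1 hw) (ε/2) (by linarith)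
  have hwK : ∀ k ≥ K, w k ≤ ε/2 := by
    intro k hk
    have := hK k hk
    rw [Real.dist_eq, sub_zero, abs_of_nonneg (hw0 k)] at this
    linarith
  set C := ∑ k ∈ Finset.Icc 1 K, q^k * w k with hC
  have hC0 : 0 ≤ C := Finset.sum_nonneg (fun k _ => mul_nonneg (by positivity) (hw0 k))
  -- Sq n → ∞
  have hSq : Tendsto (fun n => ∑ k ∈ Finset.Icc 1 n, q^k) atTop atTop := by
    apply tendsto_atTop_mono' atTop
      (by filter_upwards [eventually_ge_atTop 1] with n hn; exact sq_ge q hq n hn)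
      (tendsto_pow_atTop_atTop_of_one_lt hq)
  obtain ⟨N, hN⟩ := (tendsto_atTop.1 hSq (2*C/ε + 1)).exists_forall_of_atTop
  refine ⟨max N (max K 1), fun n hn => ?_⟩
  have hnN : N ≤ n := le_trans (le_max_left _ _) hn
  have hnK : K ≤ n := le_trans (le_trans (le_max_left _ _) (le_max_right _ _)) hn
  have hn1 : 1 ≤ n := le_trans (le_trans (le_max_right _ _) (le_max_right _ _)) hn
  set S := ∑ k ∈ Finset.Icc 1 n, q^k with hS
  have hSpos : 0 < S := sq_pos q hq n hn1
  have hSbig : 2*C/ε + 1 ≤ S := hN n hnN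
  -- numerator bound
  have hsplit : ∑ k ∈ Finset.Icc 1 n, q^k * w k ≤ C + (ε/2) * S := by
    have hdecomp : (∑ k ∈ Finset.Ioc 0 K, q^k * w k) + ∑ k ∈ Finset.Ioc K n, q^k * w k
        = ∑ k ∈ Finset.Ioc 0 n, q^k * w k :=
      Finset.sum_Ioc_consecutive _ (Nat.zero_le K) hnK
    have hIcc : ∀ m : ℕ, Finset.Icc 1 m = Finset.Ioc 0 m := fun m => by
      rw [← Finset.Icc_add_one_left_eq_Ioc]; rfl
    rw [hIcc, ← hdecomp, ← hIcc]
    have htail : ∑ k ∈ Finset.Ioc K n, q^k * w k ≤ (ε/2) * S := by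
      calc ∑ k ∈ Finset.Ioc K n, q^k * w k ≤ ∑ k ∈ Finset.Ioc K n, q^k * (ε/2) := by
            apply Finset.sum_le_sum
            intro k hk
            exact mul_le_mul_of_nonneg_left (hwK k (Finset.mem_Ioc.1 hk).1.le) (by positivity)
        _ = (ε/2) * ∑ k ∈ Finset.Ioc K n, q^k := by rw [Finset.mul_sum]; congr 1; ext k; ring
        _ ≤ (ε/2) * S := by
            apply mul_le_mul_of_nonneg_left _ (by linarith)
            rw [hS, hIcc]
            exact Finset.sum_le_sum_of_subset_of_nonneg
              (Finset.Ioc_subset_Ioc (Nat.zero_le K) le_rfl) (fun k _ _ => by positivity)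
    linarith
  have hnum0 : 0 ≤ ∑ k ∈ Finset.Icc 1 n, q^k * w k :=
    Finset.sum_nonneg (fun k _ => mul_nonneg (by positivity) (hw0 k))
  rw [Real.dist_eq, sub_zero, abs_of_nonneg (div_nonneg hnum0 hSpos.le)]
  rw [div_lt_iff₀ hSpos]
  have h1 : (2*C/ε + 1) * ε ≤ S * ε := mul_le_mul_of_nonneg_right hSbig hε.le
  have h2 : 2*C + ε ≤ S*ε := by
    have hε' : ε ≠ 0 := ne_of_gt hε
    field_simp at h1
    linarith
  calc ∑ k ∈ Finset.Icc 1 n, q^k * w k ≤ C + (ε/2) * S := hsplit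
    _ < ε * S := by nlinarith

lemma ratio_tendsto (r : ℝ) (hr : 3/2 < r) (u : ℕ → ℝ) (L : ℝ)
    (hu : Tendsto u atTop (nhds L)) :
    Tendsto (fun n => ((2/3)^n * u n
        + ∑ k ∈ Finset.Icc 1 n, r^k * ((2/3:ℝ)^(k-1) * u (k-1) - (2/3)^k * u k)) /
      ((2/3)^n + ∑ k ∈ Finset.Icc 1 n, r^k * ((2/3:ℝ)^(k-1) - (2/3)^k)))
      atTop (nhds L) := by
  have hr0 : (0:ℝ) < r := by linarith
  set q : ℝ := 2*r/3 with hqdef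
  have hq : 1 < q := by rw [hqdef]; linarith
  have hq0 : (0:ℝ) < q := by linarith
  set v : ℕ → ℝ := fun k => u k - L with hvdef
  have hv : Tendsto v atTop (nhds 0) := by
    have := hu.sub_const L
    simpa using this
  set w : ℕ → ℝ := fun k => |v (k-1)| + |v k| with hwdef
  have hw0 : ∀ k, 0 ≤ w k := fun k => add_nonneg (abs_nonneg _) (abs_nonneg _)
  have hw : Tendsto w atTop (nhds 0) := by
    have h1 : Tendsto (fun k : ℕ => |v (k-1)|) atTop (nhds 0) := by
      have : Tendsto (fun k : ℕ => v (k-1)) atTop (nhds 0) :=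
        hv.comp (tendsto_sub_atTop_nat 1)
      simpa using this.abs
    have h2 : Tendsto (fun k : ℕ => |v k|) atTop (nhds 0) := by simpa using hv.abs
    simpa using h1.add h2
  set D : ℕ → ℝ := fun n => (2/3)^n + ∑ k ∈ Finset.Icc 1 n, r^k * ((2/3:ℝ)^(k-1) - (2/3)^k)
    with hDdef
  set N : ℕ → ℝ := fun n => (2/3)^n * u n
      + ∑ k ∈ Finset.Icc 1 n, r^k * ((2/3:ℝ)^(k-1) * u (k-1) - (2/3)^k * u k) with hNdef
  -- denominator identity
  have hterm : ∀ k ∈ Finset.Icc 1 (10^10), True := fun _ _ => trivial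
  have hden : ∀ k : ℕ, 1 ≤ k → r^k * ((2/3:ℝ)^(k-1) - (2/3)^k) = (1/2) * q^k := by
    intro k hk
    obtain ⟨j, rfl⟩ := Nat.exists_eq_add_of_le hk
    have : 1 + j - 1 = j := by omega
    rw [this, hqdef]
    rw [show (1 + j) = j + 1 by omega]
    rw [pow_succ, pow_succ, pow_succ, div_pow, div_pow, mul_pow]
    ring
  have hDeq : ∀ n, D n = (2/3)^n + (1/2) * ∑ k ∈ Finset.Icc 1 n, q^k := by
    intro n
    rw [hDdef]
    simp only
    rw [Finset.mul_sum]
    congr 1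
    apply Finset.sum_congr rfl
    intro k hk
    exact hden k (Finset.mem_Icc.1 hk).1
  have hDpos : ∀ n, 0 < D n := by
    intro n
    rw [hDeq]
    have : 0 ≤ ∑ k ∈ Finset.Icc 1 n, q^k :=
      Finset.sum_nonneg fun k _ => by positivity
    positivity
  have hD1 : ∀ n, (2/3:ℝ)^n ≤ D n := by
    intro n
    rw [hDeq]
    have : 0 ≤ ∑ k ∈ Finset.Icc 1 n, q^k :=
      Finset.sum_nonneg fun k _ => by positivity
    linarith
  have hD2 : ∀ n, 1 ≤ n → (1/2) * ∑ k ∈ Finset.Icc 1 n, q^k ≤ D n := by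
    intro n hn
    rw [hDeq]
    linarith [pow_pos (show (0:ℝ) < 2/3 by norm_num) n]
  -- key difference formula
  have hkey : ∀ n, N n - L * D n = (2/3)^n * v n
      + ∑ k ∈ Finset.Icc 1 n, r^k * ((2/3:ℝ)^(k-1) * v (k-1) - (2/3)^k * v k) := by
    intro n
    rw [hNdef, hDdef, hvdef]
    simp only
    rw [mul_add, Finset.mul_sum, add_sub_add_comm, ← Finset.sum_sub_distrib]
    congr 1
    · ring
    · apply Finset.sum_congr rfl
      intro k _
      ring
  -- abs bound
  have habs : ∀ n, |N n - L * D n| ≤ (2/3)^n * |v n|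
      + (3/2) * ∑ k ∈ Finset.Icc 1 n, q^k * w k := by
    intro n
    rw [hkey]
    calc |(2/3:ℝ)^n * v n + ∑ k ∈ Finset.Icc 1 n, r^k * ((2/3:ℝ)^(k-1) * v (k-1) - (2/3)^k * v k)|
        ≤ |(2/3:ℝ)^n * v n| + |∑ k ∈ Finset.Icc 1 n, r^k * ((2/3:ℝ)^(k-1) * v (k-1) - (2/3)^k * v k)| :=
          abs_add_le _ _
      _ ≤ (2/3)^n * |v n| + (3/2) * ∑ k ∈ Finset.Icc 1 n, q^k * w k := by
          apply add_le_add
          · rw [abs_mul, abs_of_nonneg (by positivity : (0:ℝ) ≤ (2/3:ℝ)^n)]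
          · calc |∑ k ∈ Finset.Icc 1 n, r^k * ((2/3:ℝ)^(k-1) * v (k-1) - (2/3)^k * v k)|
                ≤ ∑ k ∈ Finset.Icc 1 n, |r^k * ((2/3:ℝ)^(k-1) * v (k-1) - (2/3)^k * v k)| :=
                  Finset.abs_sum_le_sum_abs _ _
              _ ≤ ∑ k ∈ Finset.Icc 1 n, (3/2) * (q^k * w k) := by
                  apply Finset.sum_le_sum
                  intro k hk
                  have hk1 : 1 ≤ k := (Finset.mem_Icc.1 hk).1
                  have hpow : (2/3:ℝ)^k ≤ (2/3:ℝ)^(k-1) :=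
                    pow_le_pow_of_le_one (by norm_num) (by norm_num) (by omega)
                  have hq23 : r^k * (2/3:ℝ)^(k-1) = (3/2) * q^k := by
                    obtain ⟨j, rfl⟩ := Nat.exists_eq_add_of_le hk1
                    have h1 : 1 + j - 1 = j := by omega
                    rw [h1, hqdef, show (1 + j) = j + 1 by omega, pow_succ, pow_succ,
                      div_pow, div_pow, mul_pow]
                    ring
                  calc |r^k * ((2/3:ℝ)^(k-1) * v (k-1) - (2/3)^k * v k)|
                      = r^k * |(2/3:ℝ)^(k-1) * v (k-1) - (2/3)^k * v k| := by
                        rw [abs_mul, abs_of_nonneg (by positivity : (0:ℝ) ≤ r^k)]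
                    _ ≤ r^k * ((2/3:ℝ)^(k-1) * |v (k-1)| + (2/3)^k * |v k|) := by
                        apply mul_le_mul_of_nonneg_left _ (by positivity)
                        calc |(2/3:ℝ)^(k-1) * v (k-1) - (2/3)^k * v k|
                            ≤ |(2/3:ℝ)^(k-1) * v (k-1)| + |(2/3:ℝ)^k * v k| := abs_sub _ _
                          _ = (2/3:ℝ)^(k-1) * |v (k-1)| + (2/3)^k * |v k| := by
                              rw [abs_mul, abs_mul, abs_of_nonneg (a := (2/3:ℝ)^(k-1)) (by positivity),
                                abs_of_nonneg (a := (2/3:ℝ)^k) (by positivity)]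
                    _ ≤ r^k * ((2/3:ℝ)^(k-1) * |v (k-1)| + (2/3)^(k-1) * |v k|) := by
                        apply mul_le_mul_of_nonneg_left _ (by positivity)
                        have := mul_le_mul_of_nonneg_right hpow (abs_nonneg (v k))
                        linarith
                    _ = (3/2) * (q^k * w k) := by
                        rw [hwdef]
                        simp only
                        linear_combination (|v (k - 1)| + |v k|) * hq23
              _ = (3/2) * ∑ k ∈ Finset.Icc 1 n, q^k * w k := by
                  rw [Finset.mul_sum]
  -- final squeeze
  rw [tendsto_iff_dist_tendsto_zero]
  apply squeeze_zero' (Filter.Eventually.of_forall fun n => dist_nonneg)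
    (g := fun n => |v n| + 3 * ((∑ k ∈ Finset.Icc 1 n, q^k * w k) / ∑ k ∈ Finset.Icc 1 n, q^k))
  · filter_upwards [eventually_ge_atTop 1] with n hn
    have hDn := hDpos n
    rw [Real.dist_eq, show N n / D n - L = (N n - L * D n) / D n by field_simp, abs_div,
      abs_of_nonneg hDn.le, div_le_iff₀ hDn]
    have hSqpos := sq_pos q hq n hn
    have h1 : (2/3:ℝ)^n * |v n| ≤ |v n| * D n := by
      have := mul_le_mul_of_nonneg_left (hD1 n) (abs_nonneg (v n))
      calc (2/3:ℝ)^n * |v n| = |v n| * (2/3:ℝ)^n := by ring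
        _ ≤ |v n| * D n := this
    have h2 : (3/2) * ∑ k ∈ Finset.Icc 1 n, q^k * w k
        ≤ 3 * ((∑ k ∈ Finset.Icc 1 n, q^k * w k) / ∑ k ∈ Finset.Icc 1 n, q^k) * D n := by
      have hnum0 : 0 ≤ ∑ k ∈ Finset.Icc 1 n, q^k * w k :=
        Finset.sum_nonneg fun k _ => mul_nonneg (by positivity) (hw0 k)
      have e : 3 * ((∑ k ∈ Finset.Icc 1 n, q^k * w k) / ∑ k ∈ Finset.Icc 1 n, q^k)
          * ((1/2) * ∑ k ∈ Finset.Icc 1 n, q^k) = (3/2) * ∑ k ∈ Finset.Icc 1 n, q^k * w k := by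
        field_simp
      calc (3/2) * ∑ k ∈ Finset.Icc 1 n, q^k * w k
          = 3 * ((∑ k ∈ Finset.Icc 1 n, q^k * w k) / ∑ k ∈ Finset.Icc 1 n, q^k)
            * ((1/2) * ∑ k ∈ Finset.Icc 1 n, q^k) := e.symm
        _ ≤ 3 * ((∑ k ∈ Finset.Icc 1 n, q^k * w k) / ∑ k ∈ Finset.Icc 1 n, q^k) * D n := by
            apply mul_le_mul_of_nonneg_left (hD2 n hn)
              (mul_nonneg (by norm_num : (0:ℝ) ≤ 3) (div_nonneg hnum0 hSqpos.le))
    calc |N n - L * D n| ≤ (2/3)^n * |v n| + (3/2) * ∑ k ∈ Finset.Icc 1 n, q^k * w k := habs n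
      _ ≤ (|v n| + 3 * ((∑ k ∈ Finset.Icc 1 n, q^k * w k) / ∑ k ∈ Finset.Icc 1 n, q^k)) * D n := by
          rw [add_mul]
          exact add_le_add h1 h2
  · have := (hv.abs).add ((weighted_avg q hq w hw0 hw).const_mul 3)
    simpa using this

lemma exp_decomp (α β : ℝ) (n : ℕ) {x : ℝ} (hx : x ∈ Set.Icc (0:ℝ) 1) :
    Real.exp (-β * psiα α n x) = (cantorStage n).indicator (fun _ => (1:ℝ)) x
      + ∑ k ∈ Finset.Icc 1 n, (Real.exp (β*α))^k * (Bset k).indicator (fun _ => (1:ℝ)) x := by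
  have harg : -β * psiα α n x = β * ∑ k ∈ Finset.Icc 1 n,
      (α * k) * (Bset k).indicator (fun _ => (1:ℝ)) x := by
    unfold psiα psi
    ring
  by_cases hxc : x ∈ cantorStage n
  · have hBk : ∀ k ∈ Finset.Icc 1 n, x ∉ Bset k := by
      intro k hk
      have : x ∈ cantorStage k := cantor_anti (Finset.mem_Icc.1 hk).2 hxc
      exact fun hB => hB.2 this
    rw [harg]
    rw [Finset.sum_eq_zero (fun k hk => by
      rw [Set.indicator_of_notMem (hBk k hk)]; ring)]
    rw [Set.indicator_of_mem hxc]
    rw [Finset.sum_eq_zero (fun k hk => by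
      rw [Set.indicator_of_notMem (hBk k hk)]; ring)]
    simp
  · classical
    have hex : ∃ j, x ∉ cantorStage j := ⟨n, hxc⟩
    set j := Nat.find hex with hjdef
    have hj : x ∉ cantorStage j := Nat.find_spec hex
    have hmin : ∀ i, i < j → x ∈ cantorStage i := fun i hi =>
      not_not.1 (Nat.find_min hex hi)
    have hj1 : 1 ≤ j := by
      rcases Nat.eq_zero_or_pos j with h | h
      · exact absurd (show x ∈ cantorStage j by rw [h]; exact hx) hj
      · exact h
    have hjn : j ≤ n := Nat.find_le hxc
    have hxBj : x ∈ Bset j := ⟨hmin (j-1) (by omega), hj⟩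
    have hBk : ∀ k, k ∈ Finset.Icc 1 n → k ≠ j → x ∉ Bset k := by
      intro k hk hkj hB
      rcases lt_or_gt_of_ne hkj with h | h
      · exact hB.2 (hmin k h)
      · exact hj (cantor_anti (by omega : j ≤ k - 1) hB.1)
    have hsum : ∀ c : ℕ → ℝ, ∑ k ∈ Finset.Icc 1 n,
        c k * (Bset k).indicator (fun _ => (1:ℝ)) x = c j := by
      intro c
      rw [Finset.sum_eq_single j
        (fun k hk hkj => by rw [Set.indicator_of_notMem (hBk k hk hkj)]; ring)
        (fun hj' => absurd (Finset.mem_Icc.2 ⟨hj1, hjn⟩) hj')]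
      rw [Set.indicator_of_mem hxBj]
      ring
    rw [harg, hsum (fun k => α * k), Set.indicator_of_notMem hxc, hsum (fun k => (Real.exp (β*α))^k)]
    rw [show β * (α * (j:ℝ)) = (j:ℝ) * (β * α) by ring, Real.exp_nat_mul]
    ring

lemma Bset_meas (k : ℕ) : MeasurableSet (Bset k) :=
  (cantor_meas (k-1)).diff (cantor_meas k)

lemma NN_eq (α β : ℝ) {F : ℝ → ℝ} (hF : Continuous F) (n : ℕ) :
    ∫ x in Set.Icc (0:ℝ) 1, F x * Real.exp (-β * psiα α n x)
      = (∫ x in cantorStage n, F x)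
        + ∑ k ∈ Finset.Icc 1 n, (Real.exp (β*α))^k *
            ((∫ x in cantorStage (k-1), F x) - ∫ x in cantorStage k, F x) := by
  set r := Real.exp (β*α) with hrdef
  have hpt : Set.EqOn (fun x => F x * Real.exp (-β * psiα α n x))
      (fun x => (cantorStage n).indicator F x
        + ∑ k ∈ Finset.Icc 1 n, r^k * (Bset k).indicator F x) (Set.Icc (0:ℝ) 1) := by
    intro x hx
    simp only
    rw [exp_decomp α β n hx, mul_add, Finset.mul_sum]
    congr 1
    · by_cases h : x ∈ cantorStage n <;>
        simp [Set.indicator_of_mem, Set.indicator_of_notMem, h]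
    · apply Finset.sum_congr rfl
      intro k _
      by_cases h : x ∈ Bset k <;> simp [h] <;> ring
  rw [MeasureTheory.setIntegral_congr_fun measurableSet_Icc hpt]
  have hint : ∀ s : Set ℝ, MeasurableSet s →
      Integrable (s.indicator F) (volume.restrict (Set.Icc (0:ℝ) 1)) := by
    intro s hs
    exact (hF.integrableOn_Icc).indicator hs
  have hintsum : ∀ k ∈ Finset.Icc 1 n, Integrable (fun x => r^k * (Bset k).indicator F x)
      (volume.restrict (Set.Icc (0:ℝ) 1)) :=
    fun k _ => (hint _ (Bset_meas k)).const_mul _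
  rw [MeasureTheory.integral_add (hint _ (cantor_meas n))
    (MeasureTheory.integrable_finset_sum _ hintsum),
    MeasureTheory.integral_finset_sum _ hintsum]
  have hIval : ∀ s : Set ℝ, MeasurableSet s → s ⊆ Set.Icc (0:ℝ) 1 →
      ∫ x in Set.Icc (0:ℝ) 1, s.indicator F x = ∫ x in s, F x := by
    intro s hs hsub
    rw [MeasureTheory.integral_indicator hs, Measure.restrict_restrict hs,
      Set.inter_eq_self_of_subset_left hsub]
  congr 1
  · exact hIval _ (cantor_meas n) (cantor_subset n)
  · apply Finset.sum_congr rfl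
    intro k hk
    rw [MeasureTheory.integral_const_mul, hIval _ (Bset_meas k)
      (fun x hx => cantor_subset (k-1) hx.1)]
    congr 1
    exact MeasureTheory.integral_diff (cantor_meas k)
      ((hF.integrableOn_Icc).mono_set (cantor_subset (k-1)))
      (cantor_anti (Nat.sub_le k 1))

lemma setIntegral_cantor {F : ℝ → ℝ} (hF : Continuous F) (m : ℕ) :
    ∫ x in cantorStage m, F x = (2/3)^m * bseq F m := by
  induction m generalizing F with
  | zero =>
    rw [show cantorStage 0 = Set.Icc (0:ℝ) 1 from rfl]
    simp [bseq]
  | succ m ih =>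
    rw [setIntegral_cantor_succ hF m, ih (SS_cont hF)]
    rw [show bseq F (m+1) = bseq (SS F) m by
      unfold bseq; rw [Function.iterate_succ_apply]]
    ring

lemma bseq_one (m : ℕ) : bseq (fun _ => (1:ℝ)) m = 1 := by
  unfold bseq
  rw [SS_one m]
  simp [Real.volume_Icc]

lemma vol_Icc01 : volume.real (Set.Icc (0:ℝ) 1) = 1 := by
  simp [Measure.real, Real.volume_Icc]

-- uniform modulus
lemma unif_mod {F : ℝ → ℝ} (hF : Continuous F) {ε : ℝ} (hε : 0 < ε) :
    ∃ m0 : ℕ, ∀ m, m0 ≤ m →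
      ∀ u ∈ Set.Icc (0:ℝ) 1, ∀ v ∈ Set.Icc (0:ℝ) 1, |u - v| ≤ (1/3)^m → |F u - F v| ≤ ε := by
  have huc := isCompact_Icc.uniformContinuousOn_of_continuous
    (hF.continuousOn : ContinuousOn F (Set.Icc (0:ℝ) 1))
  rw [Metric.uniformContinuousOn_iff] at huc
  obtain ⟨δ, hδ, hd⟩ := huc ε hε
  obtain ⟨m0, hm0⟩ := exists_pow_lt_of_lt_one hδ (by norm_num : (1/3:ℝ) < 1)
  refine ⟨m0, fun m hm u hu v hv huv => ?_⟩
  have hle : ((1:ℝ)/3)^m ≤ (1/3)^m0 :=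
    pow_le_pow_of_le_one (by norm_num) (by norm_num) hm
  have : dist u v < δ := by
    rw [Real.dist_eq]
    exact lt_of_le_of_lt (le_trans huv hle) hm0
  exact le_of_lt (by simpa [Real.dist_eq] using hd u hu v hv this)

lemma bseq_close {F : ℝ → ℝ} (hF : Continuous F) {ε : ℝ} (hε : 0 < ε) :
    ∃ m0 : ℕ, ∀ m, m0 ≤ m → ∀ j,
      (∀ y ∈ Set.Icc (0:ℝ) 1, ∀ z ∈ Set.Icc (0:ℝ) 1, |SS^[j + m] F y - SS^[m] F z| ≤ ε)
      ∧ |bseq F (j + m) - bseq F m| ≤ ε := by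
  obtain ⟨m0, hm0⟩ := unif_mod hF hε
  refine ⟨m0, fun m hm j => ?_⟩
  have hosc := osc_SS m (hm0 m hm)
  have happ : ∀ y ∈ Set.Icc (0:ℝ) 1, ∀ z ∈ Set.Icc (0:ℝ) 1,
      |SS^[j + m] F y - SS^[m] F z| ≤ ε := by
    intro y hy z hz
    rw [Function.iterate_add_apply]
    exact approx_SS j (SS^[m] F) (fun u hu v hv => hosc u hu v hv) y hy z hz
  refine ⟨happ, ?_⟩
  have hint1 : IntegrableOn (SS^[j+m] F) (Set.Icc (0:ℝ) 1) :=
    (SS_iter_cont hF (j+m)).integrableOn_Icc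
  have hint2 : IntegrableOn (SS^[m] F) (Set.Icc (0:ℝ) 1) :=
    (SS_iter_cont hF m).integrableOn_Icc
  have : bseq F (j+m) - bseq F m = ∫ y in Set.Icc (0:ℝ) 1, (SS^[j+m] F y - SS^[m] F y) := by
    unfold bseq
    rw [MeasureTheory.integral_sub hint1 hint2]
  rw [this]
  have hb := MeasureTheory.norm_setIntegral_le_of_norm_le_const (C := ε)
    (by rw [Real.volume_Icc]; norm_num : volume (Set.Icc (0:ℝ) 1) < ⊤)
    (fun y hy => by
      rw [Real.norm_eq_abs]
      exact happ y hy y hy)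
  rw [vol_Icc01, mul_one] at hb
  exact le_trans (le_of_eq (Real.norm_eq_abs _).symm) hb

lemma bseq_lim {F : ℝ → ℝ} (hF : Continuous F) :
    ∃ LF : ℝ, Tendsto (bseq F) atTop (nhds LF) := by
  apply cauchySeq_tendsto_of_complete
  rw [Metric.cauchySeq_iff']
  intro ε hε
  obtain ⟨m0, hm0⟩ := bseq_close hF (half_pos hε)
  refine ⟨m0, fun n hn => ?_⟩
  obtain ⟨j, rfl⟩ : ∃ j, n = j + m0 := ⟨n - m0, by omega⟩
  rw [Real.dist_eq]
  exact lt_of_le_of_lt ((hm0 m0 le_rfl j).2) (by linarith)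


theorem stmt15 (α β : ℝ) (hα : 0 < α) (hβc : hc / α < β) :
    ∃ μs : Measure ℝ, IsProbabilityMeasure μs ∧
      (∀ f : ℝ → ℝ, ContinuousOn f (Set.Icc 0 1) →
        Tendsto (fun n => ∫ x in Set.Icc (0:ℝ) 1,
          f x * (Real.exp (-β * psiα α n x) / Zf α β n)) atTop (nhds (∫ x, f x ∂μs))) ∧
      μs (⋂ m : ℕ, cantorStage m) = 1 := by
  have hr : (3/2 : ℝ) < Real.exp (β*α) := by
    have h1 : hc < β * α := (div_lt_iff₀ hα).1 hβc
    calc (3/2:ℝ) = Real.exp hc := by unfold hc; rw [Real.exp_log]; norm_num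
      _ < Real.exp (β*α) := Real.exp_lt_exp.2 h1
  have hbase : IsProbabilityMeasure (volume.restrict (Set.Ico (0:ℝ) 1)) :=
    ⟨by rw [Measure.restrict_apply_univ]; simp [Real.volume_Ico]⟩
  set μ : Measure ℝ := Measure.map phi (volume.restrict (Set.Ico (0:ℝ) 1)) with hμdef
  have hprob : IsProbabilityMeasure μ := Measure.isProbabilityMeasure_map phi_measurable.aemeasurable
  have hμC : μ (⋂ m : ℕ, cantorStage m) = 1 := by
    rw [hμdef, Measure.map_apply phi_measurable (MeasurableSet.iInter (fun m => cantor_meas m)),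
      Measure.restrict_apply (phi_measurable (MeasurableSet.iInter (fun m => cantor_meas m)))]
    have : phi ⁻¹' (⋂ m : ℕ, cantorStage m) ∩ Set.Ico (0:ℝ) 1 = Set.Ico (0:ℝ) 1 := by
      apply Set.inter_eq_self_of_subset_right
      intro t ht
      simp only [Set.mem_preimage, Set.mem_iInter]
      exact fun m => phi_mem_cantor m t ht
    rw [this]
    simp [Real.volume_Ico]
  have hμIccc : μ (Set.Icc (0:ℝ) 1)ᶜ = 0 := by
    rw [hμdef, Measure.map_apply phi_measurable measurableSet_Icc.compl,
      Measure.restrict_apply (phi_measurable measurableSet_Icc.compl)]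
    have : phi ⁻¹' (Set.Icc (0:ℝ) 1)ᶜ = ∅ := by
      ext t
      simp only [Set.mem_preimage, Set.mem_compl_iff, Set.mem_empty_iff_false, iff_false,
        not_not]
      exact phi_mem t
    rw [this]
    simp
  refine ⟨μ, hprob, ?_, hμC⟩
  intro f hf
  set F : ℝ → ℝ := fun x => f (max 0 (min x 1)) with hFdef
  have hproj : ∀ x : ℝ, max 0 (min x 1) ∈ Set.Icc (0:ℝ) 1 :=
    fun x => ⟨le_max_left _ _, max_le (by norm_num) (min_le_right x 1)⟩
  have hFc : Continuous F := hf.comp_continuous (continuous_const.max (continuous_id.min continuous_const)) hproj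
  have hFeq : Set.EqOn F f (Set.Icc 0 1) := fun x hx => by
    simp only [hFdef]
    rw [min_eq_left hx.2, max_eq_right hx.1]
  obtain ⟨LF, hLF⟩ := bseq_lim hFc
  -- the interval integral of F ∘ phi equals LF
  have hiter : ∀ m : ℕ, (∫ t in (0:ℝ)..1, F (phi t)) = ∫ t in (0:ℝ)..1, SS^[m] F (phi t) := by
    intro m
    induction m with
    | zero => rfl
    | succ m ih => rw [ih, phi_subst (SS_iter_cont hFc m), ← Function.iterate_succ_apply' SS m F]
  have hclose : ∀ ε : ℝ, 0 < ε → ∃ m0 : ℕ, ∀ m, m0 ≤ m →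
      |(∫ t in (0:ℝ)..1, F (phi t)) - bseq F m| ≤ ε := by
    intro ε hε
    obtain ⟨m0, hm0⟩ := unif_mod hFc hε
    refine ⟨m0, fun m hm => ?_⟩
    have hosc := osc_SS m (hm0 m hm)
    have hintm : IntegrableOn (SS^[m] F) (Set.Icc (0:ℝ) 1) :=
      (SS_iter_cont hFc m).integrableOn_Icc
    have hptw : ∀ t : ℝ, |SS^[m] F (phi t) - bseq F m| ≤ ε := by
      intro t
      have hconst : IntegrableOn (fun _ : ℝ => SS^[m] F (phi t)) (Set.Icc (0:ℝ) 1) :=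
        integrableOn_const (by rw [Real.volume_Icc]; norm_num)
      have heq : SS^[m] F (phi t) - bseq F m
          = ∫ y in Set.Icc (0:ℝ) 1, (SS^[m] F (phi t) - SS^[m] F y) := by
        rw [MeasureTheory.integral_sub hconst hintm, MeasureTheory.setIntegral_const,
          smul_eq_mul, vol_Icc01, one_mul]
        rfl
      rw [heq]
      have hb := MeasureTheory.norm_setIntegral_le_of_norm_le_const (C := ε)
        (by rw [Real.volume_Icc]; norm_num : volume (Set.Icc (0:ℝ) 1) < ⊤)
        (fun y hy => by
          rw [Real.norm_eq_abs]
          exact hosc (phi t) (phi_mem t) y hy)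
      rw [vol_Icc01, mul_one] at hb
      exact le_trans (le_of_eq (Real.norm_eq_abs _).symm) hb
    rw [hiter m]
    have heq2 : (∫ t in (0:ℝ)..1, SS^[m] F (phi t)) - bseq F m
        = ∫ t in (0:ℝ)..1, (SS^[m] F (phi t) - bseq F m) := by
      rw [intervalIntegral.integral_sub (comp_phi_integrable (SS_iter_cont hFc m) 0 1)
        intervalIntegrable_const, intervalIntegral.integral_const]
      simp
    rw [heq2]
    have hb := intervalIntegral.norm_integral_le_of_norm_le_const (C := ε)
      (f := fun t => SS^[m] F (phi t) - bseq F m) (a := 0) (b := 1)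
      (fun t _ => by rw [Real.norm_eq_abs]; exact hptw t)
    rw [Real.norm_eq_abs] at hb
    calc |∫ t in (0:ℝ)..1, (SS^[m] F (phi t) - bseq F m)| ≤ ε * |1 - 0| := hb
      _ = ε := by norm_num
  have hIeq : (∫ t in (0:ℝ)..1, F (phi t)) = LF := by
    have habs : ∀ ε : ℝ, 0 < ε → |(∫ t in (0:ℝ)..1, F (phi t)) - LF| ≤ ε := by
      intro ε hε
      obtain ⟨m0, hm0⟩ := hclose ε hε
      have htend : Tendsto (fun m => |(∫ t in (0:ℝ)..1, F (phi t)) - bseq F m|) atTop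
          (nhds |(∫ t in (0:ℝ)..1, F (phi t)) - LF|) := (tendsto_const_nhds.sub hLF).abs
      apply le_of_tendsto htend
      filter_upwards [eventually_ge_atTop m0] with m hm using hm0 m hm
    have h0 : |(∫ t in (0:ℝ)..1, F (phi t)) - LF| ≤ 0 :=
      le_of_forall_pos_le_add (fun ε hε => by simpa using habs ε hε)
    have := abs_nonpos_iff.1 h0
    linarith [sub_eq_zero.1 this, le_of_eq (sub_eq_zero.1 this)]
  have hFμ : ∫ x, F x ∂μ = LF := by
    rw [hμdef, MeasureTheory.integral_map phi_measurable.aemeasurable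
      hFc.aestronglyMeasurable]
    have hres : volume.restrict (Set.Ico (0:ℝ) 1) = volume.restrict (Set.Ioc (0:ℝ) 1) :=
      MeasureTheory.restrict_Ico_eq_restrict_Ioc
    rw [hres, ← intervalIntegral.integral_of_le (zero_le_one)]
    exact hIeq
  have hfμ : ∫ x, f x ∂μ = LF := by
    rw [← hFμ]
    apply MeasureTheory.integral_congr_ae
    rw [Filter.EventuallyEq, ae_iff]
    apply measure_mono_null _ hμIccc
    intro x hx
    simp only [Set.mem_setOf_eq] at hx
    simp only [Set.mem_compl_iff]
    intro hmem
    exact hx (hFeq hmem).symm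
  rw [hfμ]
  -- identify numerator and denominator
  have hcone : ∀ m : ℕ, (∫ x in cantorStage m, (1:ℝ)) = (2/3)^m := fun m => by
    rw [setIntegral_cantor continuous_const m, bseq_one, mul_one]
  have hZ : ∀ n : ℕ, Zf α β n = (2/3)^n
      + ∑ k ∈ Finset.Icc 1 n, (Real.exp (β*α))^k * ((2/3:ℝ)^(k-1) - (2/3)^k) := by
    intro n
    have h := NN_eq α β (F := fun _ => (1:ℝ)) continuous_const n
    simp only [one_mul] at h
    unfold Zf
    rw [h, hcone n]
    congr 1
    apply Finset.sum_congr rfl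
    intro k _
    rw [hcone, hcone]
  have hNf : ∀ n : ℕ, (∫ x in Set.Icc (0:ℝ) 1, F x * Real.exp (-β * psiα α n x))
      = (2/3)^n * bseq F n + ∑ k ∈ Finset.Icc 1 n,
        (Real.exp (β*α))^k * ((2/3:ℝ)^(k-1) * bseq F (k-1) - (2/3)^k * bseq F k) := by
    intro n
    rw [NN_eq α β hFc n, setIntegral_cantor hFc n]
    congr 1
    apply Finset.sum_congr rfl
    intro k _
    rw [setIntegral_cantor hFc, setIntegral_cantor hFc]
  have hmain := ratio_tendsto (Real.exp (β*α)) hr (bseq F) LF hLF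
  have hfun : (fun n => ∫ x in Set.Icc (0:ℝ) 1,
        f x * (Real.exp (-β * psiα α n x) / Zf α β n))
      = fun n => ((2/3)^n * bseq F n + ∑ k ∈ Finset.Icc 1 n,
          (Real.exp (β*α))^k * ((2/3:ℝ)^(k-1) * bseq F (k-1) - (2/3)^k * bseq F k)) /
        ((2/3)^n + ∑ k ∈ Finset.Icc 1 n, (Real.exp (β*α))^k * ((2/3:ℝ)^(k-1) - (2/3)^k)) := by
    funext n
    have e1 : ∫ x in Set.Icc (0:ℝ) 1, f x * (Real.exp (-β * psiα α n x) / Zf α β n)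
        = ∫ x in Set.Icc (0:ℝ) 1, (F x * Real.exp (-β * psiα α n x)) / Zf α β n := by
      apply MeasureTheory.setIntegral_congr_fun measurableSet_Icc
      intro x hx
      simp only
      rw [← hFeq hx]
      ring
    rw [e1, MeasureTheory.integral_div, hNf n, hZ n]
  rw [hfun]
  exact hmain
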